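/- Let Φ(a) = γ([a, ∞)) where γ is the standard one-dimensional Gaussian measure on ℝ. Let P be a probability measure on ℝ^d × {−1,1} with x ≠ 0 P-almost surely, and let w ∈ ℝ^d. Then the expected joint error of the Gaussian posterior Q_w = N(w, I_d) over linear classifiers satisfies: E_{(x,y)∼P} P_{(w',w'')∼N(w,I_d)⊗N(w,I_d)}( sgn(w'·x) ≠ y and sgn(w''·x) ≠ y ) = E_{(x,y)∼P} [ Φ( y·(w·x)/‖x‖ ) ]². -/

import Mathlib

/-!
STATEMENT 17: Expected joint error of the Gaussian posterior over linear
classifiers equals the expected squared probit loss: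
`E_{(x,y)∼P} P_{(w',w'')∼N(w,I_d)⊗N(w,I_d)}(sgn(w'·x) ≠ y ∧ sgn(w''·x) ≠ y)
  = E_{(x,y)∼P} [Φ(y (w·x)/‖x‖)]²`.
`ℝ^d` is `Fin d → ℝ`; `Y = {-1,1}` is `Bool` (`true ↔ +1`); `Φ(a) = γ([a,∞))`.
-/

open MeasureTheory ProbabilityTheory Real
open scoped ENNReal Classical

noncomputable section

/-- Dot product on `ℝ^d`. -/
def dot {d : ℕ} (w x : Fin d → ℝ) : ℝ := ∑ i, w i * x i

/-- Euclidean norm on `ℝ^d`. -/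
def enorm' {d : ℕ} (x : Fin d → ℝ) : ℝ := Real.sqrt (∑ i, x i ^ 2)

/-- Sign, as a Boolean label (`true ↔ +1`). -/
def linSgn (t : ℝ) : Bool := decide (0 < t)

/-- The `±1` real value of a Boolean label. -/
def toPM (b : Bool) : ℝ := if b then 1 else -1

/-- The Gaussian measure `N(w, I_d)` on `ℝ^d`. -/
def gaussPi {d : ℕ} (w : Fin d → ℝ) : Measure (Fin d → ℝ) :=
  Measure.pi fun i => gaussianReal (w i) 1

/-- The standard Gaussian tail function `Φ(a) = γ([a,∞))`. -/
def gaussTail (a : ℝ) : ℝ := (gaussianReal 0 1 (Set.Ici a)).toReal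

open scoped NNReal

lemma pdf_mul_eq (a b t : ℝ) {u v : ℝ≥0} (hu : u ≠ 0) (hv : v ≠ 0) (s : ℝ) :
    gaussianPDFReal a u s * gaussianPDFReal (b + s) v t
      = gaussianPDFReal (a + b) (u + v) t *
        ((Real.sqrt (π / (((u : ℝ) + v) / (2 * u * v))))⁻¹ *
          Real.exp (-(((u : ℝ) + v) / (2 * u * v)) *
            (s - (((v : ℝ) * a + u * (t - b)) / ((u : ℝ) + v))) ^ 2)) := by
  have hU : (0 : ℝ) < u := by positivity
  have hV : (0 : ℝ) < v := by positivity
  set k : ℝ := ((u : ℝ) + v) / (2 * u * v) with hk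
  set c : ℝ := (((v : ℝ) * a + u * (t - b)) / ((u : ℝ) + v)) with hc
  have hkpos : 0 < k := by positivity
  unfold gaussianPDFReal
  push_cast
  have hC : (Real.sqrt (2 * π * u))⁻¹ * (Real.sqrt (2 * π * v))⁻¹
      = (Real.sqrt (2 * π * ((u : ℝ) + v)))⁻¹ * (Real.sqrt (π / k))⁻¹ := by
    rw [← mul_inv, ← mul_inv, ← Real.sqrt_mul (by positivity), ← Real.sqrt_mul (by positivity)]
    congr 1
    rw [hk]
    field_simp
  have hE : Real.exp (-(s - a) ^ 2 / (2 * u)) * Real.exp (-(t - (b + s)) ^ 2 / (2 * v))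
      = Real.exp (-(t - (a + b)) ^ 2 / (2 * ((u : ℝ) + v))) * Real.exp (-k * (s - c) ^ 2) := by
    rw [← Real.exp_add, ← Real.exp_add]
    congr 1
    rw [hk, hc]
    field_simp
    ring
  calc (Real.sqrt (2 * π * u))⁻¹ * Real.exp (-(s - a) ^ 2 / (2 * u)) *
        ((Real.sqrt (2 * π * v))⁻¹ * Real.exp (-(t - (b + s)) ^ 2 / (2 * v)))
      = ((Real.sqrt (2 * π * u))⁻¹ * (Real.sqrt (2 * π * v))⁻¹) *
        (Real.exp (-(s - a) ^ 2 / (2 * u)) * Real.exp (-(t - (b + s)) ^ 2 / (2 * v))) := by ring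
    _ = ((Real.sqrt (2 * π * ((u : ℝ) + v)))⁻¹ * (Real.sqrt (π / k))⁻¹) *
        (Real.exp (-(t - (a + b)) ^ 2 / (2 * ((u : ℝ) + v))) * Real.exp (-k * (s - c) ^ 2)) := by
        rw [hC, hE]
    _ = _ := by ring

lemma conv_integrable (a b t : ℝ) {u v : ℝ≥0} (hu : u ≠ 0) (hv : v ≠ 0) :
    Integrable (fun s => gaussianPDFReal a u s * gaussianPDFReal (b + s) v t) := by
  have hU : (0 : ℝ) < u := by positivity
  have hV : (0 : ℝ) < v := by positivity
  have hkpos : (0:ℝ) < ((u : ℝ) + v) / (2 * u * v) := by positivity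
  have h : (fun s => gaussianPDFReal a u s * gaussianPDFReal (b + s) v t)
      = fun s => gaussianPDFReal (a + b) (u + v) t *
        ((Real.sqrt (π / (((u : ℝ) + v) / (2 * u * v))))⁻¹ *
          Real.exp (-(((u : ℝ) + v) / (2 * u * v)) *
            (s - (((v : ℝ) * a + u * (t - b)) / ((u : ℝ) + v))) ^ 2)) :=
    funext (pdf_mul_eq a b t hu hv)
  rw [h]
  exact (((integrable_exp_neg_mul_sq hkpos).comp_sub_right _).const_mul _).const_mul _

lemma conv_integral (a b t : ℝ) {u v : ℝ≥0} (hu : u ≠ 0) (hv : v ≠ 0) :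
    ∫ s, gaussianPDFReal a u s * gaussianPDFReal (b + s) v t
      = gaussianPDFReal (a + b) (u + v) t := by
  have hU : (0 : ℝ) < u := by positivity
  have hV : (0 : ℝ) < v := by positivity
  have hkpos : (0:ℝ) < ((u : ℝ) + v) / (2 * u * v) := by positivity
  simp_rw [pdf_mul_eq a b t hu hv]
  rw [integral_const_mul, integral_const_mul,
    integral_sub_right_eq_self
      (fun s => Real.exp (-(((u : ℝ) + v) / (2 * u * v)) * s ^ 2)) _,
    integral_gaussian, inv_mul_cancel₀ (ne_of_gt (Real.sqrt_pos.mpr (by positivity))), mul_one]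

lemma measurable_pdf2 (b : ℝ) (v : ℝ≥0) :
    Measurable (Function.uncurry fun x => gaussianPDF (b + x) v) := by
  unfold Function.uncurry gaussianPDF gaussianPDFReal
  fun_prop

lemma measurable_pdf1 (b t : ℝ) (v : ℝ≥0) :
    Measurable fun x : ℝ => gaussianPDF (b + x) v t := by
  unfold gaussianPDF gaussianPDFReal
  fun_prop

lemma gaussianReal_conv_aux (a b : ℝ) {u v : ℝ≥0} (hu : u ≠ 0) (hv : v ≠ 0) :
    ((gaussianReal a u).prod (gaussianReal b v)).map (fun p : ℝ × ℝ => p.1 + p.2)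
      = gaussianReal (a + b) (u + v) := by
  have hadd : Measurable fun p : ℝ × ℝ => p.1 + p.2 := measurable_fst.add measurable_snd
  ext s hs
  rw [Measure.map_apply hadd hs, Measure.prod_apply (hadd hs)]
  have h1 : ∀ x : ℝ, gaussianReal b v (Prod.mk x ⁻¹' ((fun p : ℝ × ℝ => p.1 + p.2) ⁻¹' s))
      = ∫⁻ t in s, gaussianPDF (b + x) v t := by
    intro x
    have : Prod.mk x ⁻¹' ((fun p : ℝ × ℝ => p.1 + p.2) ⁻¹' s) = (fun y => x + y) ⁻¹' s := rfl
    rw [this, ← Measure.map_apply (measurable_const_add x) hs,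
      gaussianReal_map_const_add, gaussianReal_apply _ hv]
  simp_rw [h1]
  rw [lintegral_lintegral_swap]
  swap
  · exact (measurable_pdf2 b v).aemeasurable
  have h2 : ∀ t : ℝ, (∫⁻ x, gaussianPDF (b + x) v t ∂(gaussianReal a u))
      = gaussianPDF (a + b) (u + v) t := by
    intro t
    rw [gaussianReal_of_var_ne_zero _ hu,
      lintegral_withDensity_eq_lintegral_mul _ (measurable_gaussianPDF a u)
        (measurable_pdf1 b t v)]
    have h3 : ∀ x : ℝ, (gaussianPDF a u * fun x => gaussianPDF (b + x) v t) x
        = ENNReal.ofReal (gaussianPDFReal a u x * gaussianPDFReal (b + x) v t) := by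
      intro x
      simp only [Pi.mul_apply, gaussianPDF]
      rw [ENNReal.ofReal_mul (gaussianPDFReal_nonneg _ _ _)]
    simp_rw [h3]
    rw [← ofReal_integral_eq_lintegral_ofReal (conv_integrable a b t hu hv)
      (ae_of_all _ fun x => mul_nonneg (gaussianPDFReal_nonneg _ _ _)
        (gaussianPDFReal_nonneg _ _ _)),
      conv_integral a b t hu hv]
    rfl
  simp_rw [h2]
  rw [← gaussianReal_apply _ (by simp [hu]) s]

lemma gaussianReal_conv (a b : ℝ) (u v : ℝ≥0) :
    ((gaussianReal a u).prod (gaussianReal b v)).map (fun p : ℝ × ℝ => p.1 + p.2)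
      = gaussianReal (a + b) (u + v) := by
  have hadd : Measurable fun p : ℝ × ℝ => p.1 + p.2 := measurable_fst.add measurable_snd
  by_cases hu : u = 0
  · subst hu
    rw [gaussianReal_zero_var, Measure.dirac_prod,
      Measure.map_map hadd measurable_prodMk_left]
    have : ((fun p : ℝ × ℝ => p.1 + p.2) ∘ Prod.mk a) = fun x => a + x := rfl
    rw [this, gaussianReal_map_const_add, add_comm b a, zero_add]
  by_cases hv : v = 0
  · subst hv
    have hmk : Measurable fun x : ℝ => (x, b) := by exact measurable_id.prodMk measurable_const
    rw [gaussianReal_zero_var, Measure.prod_dirac, Measure.map_map hadd hmk]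
    have : ((fun p : ℝ × ℝ => p.1 + p.2) ∘ fun x => (x, b)) = fun x => x + b := rfl
    rw [this, gaussianReal_map_add_const, add_zero]
  · exact gaussianReal_conv_aux a b hu hv

def nnSq (c : ℝ) : ℝ≥0 := ⟨c ^ 2, sq_nonneg _⟩

lemma measurable_dot {d : ℕ} (x : Fin d → ℝ) : Measurable fun g : Fin d → ℝ => dot g x := by
  unfold dot
  exact Finset.measurable_sum _ fun i _ => (measurable_pi_apply i).mul_const _

instance gaussPi_prob {d : ℕ} (w : Fin d → ℝ) : IsProbabilityMeasure (gaussPi w) := by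
  unfold gaussPi; infer_instance

lemma gaussPi_map_dot : ∀ (d : ℕ) (w x : Fin d → ℝ),
    (gaussPi w).map (fun g => dot g x) = gaussianReal (dot w x) (∑ i, nnSq (x i)) := by
  intro d
  induction d with
  | zero =>
    intro w x
    have hd : ∀ g : Fin 0 → ℝ, dot g x = 0 := fun g => by simp [dot]
    have : (fun g : Fin 0 → ℝ => dot g x) = fun _ => (0 : ℝ) := funext hd
    rw [this]
    have hpi : (gaussPi w) = Measure.dirac (fun i : Fin 0 => (0:ℝ)) := by
      unfold gaussPi
      rw [Measure.pi_of_empty]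
      congr 1
      exact funext fun i => i.elim0
    rw [hpi, Measure.map_dirac' measurable_const]
    simp [hd w, gaussianReal_zero_var]
  | succ n ih =>
    intro w x
    set e := MeasurableEquiv.piFinSuccAbove (fun _ : Fin (n + 1) => ℝ) 0 with he
    have hmp := measurePreserving_piFinSuccAbove (fun i => gaussianReal (w i) 1) 0
    -- (gaussPi w).map f = (map e (gaussPi w)).map (f ∘ e.symm)
    have hcomp : (fun g : Fin (n+1) → ℝ => dot g x)
        = (fun p : ℝ × (Fin n → ℝ) => p.1 * x 0 + dot p.2 (fun j => x j.succ)) ∘ e := by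
      funext g
      simp only [Function.comp_apply]
      have : dot g x = g 0 * x 0 + ∑ j : Fin n, g j.succ * x j.succ := by
        rw [dot, Fin.sum_univ_succ]
      rw [this, dot]
      rfl
    have hm1 : Measurable fun a : ℝ => a * x 0 := by fun_prop
    have hm2 : Measurable fun h : Fin n → ℝ => dot h (fun j => x j.succ) := measurable_dot _
    have hg : Measurable fun p : ℝ × (Fin n → ℝ) => p.1 * x 0 + dot p.2 (fun j => x j.succ) := by
      exact (measurable_fst.mul_const _).add (hm2.comp measurable_snd)
    rw [hcomp, ← Measure.map_map hg e.measurable]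
    rw [show Measure.map e (gaussPi w) = ((gaussianReal (w 0) 1).prod
        (Measure.pi fun j : Fin n => gaussianReal (w (Fin.succAbove 0 j)) 1)) from hmp.map_eq]
    have hsa : (Measure.pi fun j : Fin n => gaussianReal (w (Fin.succAbove 0 j)) 1)
        = gaussPi fun i => w i.succ := by
      unfold gaussPi
      congr 1
    rw [hsa]
    have hsplit : (fun p : ℝ × (Fin n → ℝ) => p.1 * x 0 + dot p.2 (fun j => x j.succ))
        = (fun p : ℝ × ℝ => p.1 + p.2) ∘
          (Prod.map (fun a : ℝ => a * x 0) (fun h : Fin n → ℝ => dot h (fun j => x j.succ))) := rfl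
    rw [hsplit, ← Measure.map_map (g := fun p : ℝ × ℝ => p.1 + p.2) (measurable_fst.add measurable_snd) (hm1.prodMap hm2),
      ← Measure.map_prod_map _ _ hm1 hm2,
      gaussianReal_map_mul_const, ih (fun i => w i.succ) (fun j => x j.succ),
      gaussianReal_conv]
    congr 1
    · simp only [dot, Fin.sum_univ_succ]
      ring
    · rw [Fin.sum_univ_succ (f := fun i => nnSq (x i)), mul_one]
      rfl

lemma gaussianReal_neg_apply (q : ℝ) :
    gaussianReal 0 1 (Set.Ici q) = gaussianReal 0 1 (Set.Iic (-q)) := by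
  have hneg : (gaussianReal 0 1).map (fun z : ℝ => (-1) * z) = gaussianReal 0 1 := by
    rw [gaussianReal_map_const_mul (-1 : ℝ)]
    norm_num
  conv_lhs => rw [← hneg]
  rw [Measure.map_apply (measurable_const_mul _) measurableSet_Ici]
  congr 1
  ext z
  simp only [Set.mem_preimage, Set.mem_Ici, Set.mem_Iic]
  constructor <;> intro h <;> linarith

lemma gaussianReal_Ioi_eq_Ici (q : ℝ) :
    gaussianReal 0 1 (Set.Ioi q) = gaussianReal 0 1 (Set.Ici q) := by
  have hsing : gaussianReal 0 1 {q} = 0 :=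
    gaussianReal_absolutelyContinuous 0 one_ne_zero (by simp)
  rw [← Set.Ioi_union_left, measure_union (by simp) (measurableSet_singleton q), hsing, add_zero]

lemma gaussPi_event {d : ℕ} (w x : Fin d → ℝ) (hx : x ≠ 0) (y : Bool) :
    (gaussPi w) {w' | linSgn (dot w' x) ≠ y}
      = gaussianReal 0 1 (Set.Ici (toPM y * dot w x / enorm' x)) := by
  have hs : 0 < ∑ i, x i ^ 2 := by
    obtain ⟨i, hi⟩ := Function.ne_iff.mp hx
    exact Finset.sum_pos' (fun i _ => sq_nonneg _) ⟨i, Finset.mem_univ i, pow_two_pos_of_ne_zero hi⟩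
  have hr : 0 < enorm' x := Real.sqrt_pos.mpr hs
  set r := enorm' x with hrdef
  set m := dot w x with hmdef
  have hr2 : r ^ 2 = ∑ i, x i ^ 2 := Real.sq_sqrt hs.le
  have hscale : gaussianReal m (∑ i, nnSq (x i)) = (gaussianReal 0 1).map (fun z => z * r + m) := by
    have h1 : Measurable fun z : ℝ => z * r := by fun_prop
    have hcomp : (fun z : ℝ => z * r + m) = (fun z : ℝ => z + m) ∘ (fun z : ℝ => z * r) := rfl
    rw [hcomp, ← Measure.map_map (measurable_add_const m) h1, gaussianReal_map_mul_const,
      gaussianReal_map_add_const]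
    norm_num
    congr 1
    refine NNReal.eq ?_
    push_cast [nnSq]
    rw [hr2]
    exact NNReal.coe_sum Finset.univ (fun i => nnSq (x i))
  have hmap : ∀ s : Set ℝ, MeasurableSet s →
      (gaussPi w) ((fun w' => dot w' x) ⁻¹' s)
        = gaussianReal 0 1 ((fun z => z * r + m) ⁻¹' s) := by
    intro s hsm
    rw [← Measure.map_apply (measurable_dot x) hsm, gaussPi_map_dot, hscale,
      Measure.map_apply (by fun_prop) hsm]
  cases y with
  | true =>
    have hA : {w' : Fin d → ℝ | linSgn (dot w' x) ≠ true}
        = (fun w' => dot w' x) ⁻¹' Set.Iic 0 := by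
      ext w'
      simp [linSgn, not_lt]
    rw [hA, hmap _ measurableSet_Iic]
    have hpre : (fun z : ℝ => z * r + m) ⁻¹' Set.Iic 0 = Set.Iic (-(m / r)) := by
      ext z
      simp only [Set.mem_preimage, Set.mem_Iic]
      constructor
      · intro h
        have h3 : z ≤ -m / r := (le_div_iff₀ hr).mpr (by linarith)
        rwa [neg_div] at h3
      · intro h
        have h3 : z ≤ -m / r := by rwa [neg_div]
        have h2 : z * r ≤ -m := (le_div_iff₀ hr).mp h3
        linarith
    rw [hpre, ← gaussianReal_neg_apply]
    norm_num [toPM]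
  | false =>
    have hA : {w' : Fin d → ℝ | linSgn (dot w' x) ≠ false}
        = (fun w' => dot w' x) ⁻¹' Set.Ioi 0 := by
      ext w'
      simp [linSgn]
    rw [hA, hmap _ measurableSet_Ioi]
    have hpre : (fun z : ℝ => z * r + m) ⁻¹' Set.Ioi 0 = Set.Ioi (-(m / r)) := by
      ext z
      simp only [Set.mem_preimage, Set.mem_Ioi]
      constructor
      · intro h
        have h3 : -m / r < z := (div_lt_iff₀ hr).mpr (by linarith)
        rwa [neg_div] at h3
      · intro h
        have h3 : -m / r < z := by rwa [neg_div]
        have h2 : -m < z * r := (div_lt_iff₀ hr).mp h3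
        linarith
    rw [hpre, gaussianReal_Ioi_eq_Ici]
    have h4 : toPM false * m / r = -(m / r) := by
      rw [show toPM false = -1 from rfl]
      ring
    rw [h4]

theorem joint_error_eq_squared_probit_loss
    {d : ℕ}
    (P : Measure ((Fin d → ℝ) × Bool)) [IsProbabilityMeasure P]
    (h0 : ∀ᵐ z ∂P, z.1 ≠ 0)
    (w : Fin d → ℝ) :
    ∫ z, (((gaussPi w).prod (gaussPi w))
        {p | linSgn (dot p.1 z.1) ≠ z.2 ∧ linSgn (dot p.2 z.1) ≠ z.2}).toReal ∂P
      = ∫ z, gaussTail (toPM z.2 * dot w z.1 / enorm' z.1) ^ 2 ∂P := by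
  refine integral_congr_ae ?_
  filter_upwards [h0] with z hz
  have hset : {p : (Fin d → ℝ) × (Fin d → ℝ) |
      linSgn (dot p.1 z.1) ≠ z.2 ∧ linSgn (dot p.2 z.1) ≠ z.2}
      = {w' | linSgn (dot w' z.1) ≠ z.2} ×ˢ {w' | linSgn (dot w' z.1) ≠ z.2} := rfl
  rw [hset, Measure.prod_prod, ENNReal.toReal_mul, gaussPi_event w z.1 hz z.2, sq]
  rfl
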